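/- arXiv:quant-ph/0505110 — 2 statements merged into one kernel-verified Lean document; each statement's English description precedes it below -/
import Mathlib

section
/- A channel Λ on the bipartite system A × B is A↛B semicausal if and only if (D_A ⊗ id) ∘ Λ ∘ (D_A ⊗ id) = (D_A ⊗ id) ∘ Λ as linear maps on matrices indexed by A × B. -/
open Matrix BigOperators
open scoped Kronecker ComplexOrder

noncomputable section

/-- Partial trace over the `A` factor. -/
def trA {A B : Type*} [Fintype A] (ρ : Matrix (A × B) (A × B) ℂ) : Matrix B B ℂ :=
  Matrix.of fun b b' => ∑ a, ρ (a, b) (a, b')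

/-- Partial trace over the `B` factor. -/
def trB {A B : Type*} [Fintype B] (ρ : Matrix (A × B) (A × B) ℂ) : Matrix A A ℂ :=
  Matrix.of fun a a' => ∑ b, ρ (a, b) (a', b)

/-- A state: positive semidefinite matrix of trace 1. -/
def IsState {n : Type*} [Fintype n] (ρ : Matrix n n ℂ) : Prop :=
  ρ.PosSemidef ∧ ρ.trace = 1

/-- A channel: a map admitting a Kraus representation `Λ[X] = ∑ i, K i * X * (K i)ᴴ`
with `∑ i, (K i)ᴴ * K i = 1` (completely positive and trace-preserving). -/
def IsChannel {n : Type*} [Fintype n] [DecidableEq n]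
    (Λ : Matrix n n ℂ → Matrix n n ℂ) : Prop :=
  ∃ (m : ℕ) (K : Fin m → Matrix n n ℂ),
    (∀ X, Λ X = ∑ i, K i * X * (K i)ᴴ) ∧ (∑ i, (K i)ᴴ * K i = 1)

/-- The induced map `Γ ⊗ id` on the bipartite system, acting blockwise. -/
def tensIdA {A B : Type*} (Γ : Matrix A A ℂ → Matrix A A ℂ)
    (ρ : Matrix (A × B) (A × B) ℂ) : Matrix (A × B) (A × B) ℂ :=
  Matrix.of fun p q => Γ (Matrix.of fun a a' => ρ (a, p.2) (a', q.2)) p.1 q.1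

/-- The induced map `id ⊗ Γ` on the bipartite system, acting blockwise. -/
def tensIdB {A B : Type*} (Γ : Matrix B B ℂ → Matrix B B ℂ)
    (ρ : Matrix (A × B) (A × B) ℂ) : Matrix (A × B) (A × B) ℂ :=
  Matrix.of fun p q => Γ (Matrix.of fun b b' => ρ (p.1, b) (q.1, b')) p.2 q.2

/-- `Λ` is A↛B semicausal: no channel applied by Alice beforehand affects Bob's
reduced output state. -/
def SemicausalAtoB {A B : Type*} [Fintype A] [Fintype B] [DecidableEq A]
    (Λ : Matrix (A × B) (A × B) ℂ → Matrix (A × B) (A × B) ℂ) : Prop :=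
  ∀ ρ : Matrix (A × B) (A × B) ℂ, IsState ρ →
    ∀ Γ : Matrix A A ℂ → Matrix A A ℂ, IsChannel Γ →
      trA (Λ (tensIdA Γ ρ)) = trA (Λ ρ)

/-- `Λ` is A↚B semicausal: no channel applied by Bob beforehand affects Alice's
reduced output state. -/
def SemicausalBtoA {A B : Type*} [Fintype A] [Fintype B] [DecidableEq B]
    (Λ : Matrix (A × B) (A × B) ℂ → Matrix (A × B) (A × B) ℂ) : Prop :=
  ∀ ρ : Matrix (A × B) (A × B) ℂ, IsState ρ →
    ∀ Γ : Matrix B B ℂ → Matrix B B ℂ, IsChannel Γ →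
      trB (Λ (tensIdB Γ ρ)) = trB (Λ ρ)

/-- `Λ` is causal: both A↛B and A↚B semicausal. -/
def Causal {A B : Type*} [Fintype A] [Fintype B] [DecidableEq A] [DecidableEq B]
    (Λ : Matrix (A × B) (A × B) ℂ → Matrix (A × B) (A × B) ℂ) : Prop :=
  SemicausalAtoB Λ ∧ SemicausalBtoA Λ

/-- The totally depolarizing channel `D[X] = Tr(X)·I/|A|`. -/
def depol {A : Type*} [Fintype A] [DecidableEq A] : Matrix A A ℂ → Matrix A A ℂ :=
  fun X => (X.trace / (Fintype.card A : ℂ)) • (1 : Matrix A A ℂ)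

-- ===== helpers =====
section ChanLemmas
variable {n : Type*} [Fintype n] [DecidableEq n]

lemma channel_trace {Λ : Matrix n n ℂ → Matrix n n ℂ} (h : IsChannel Λ)
    (X : Matrix n n ℂ) : (Λ X).trace = X.trace := by
  obtain ⟨m, K, hK, h1⟩ := h
  rw [hK, Matrix.trace_sum]
  calc ∑ i, (K i * X * (K i)ᴴ).trace = ∑ i, ((K i)ᴴ * K i * X).trace := by
        refine Finset.sum_congr rfl fun i _ => ?_
        rw [Matrix.trace_mul_cycle, Matrix.mul_assoc]
    _ = ((∑ i, (K i)ᴴ * K i) * X).trace := by rw [Finset.sum_mul, Matrix.trace_sum]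
    _ = X.trace := by rw [h1, Matrix.one_mul]

lemma channel_add {Λ : Matrix n n ℂ → Matrix n n ℂ} (h : IsChannel Λ)
    (X Y : Matrix n n ℂ) : Λ (X + Y) = Λ X + Λ Y := by
  obtain ⟨m, K, hK, -⟩ := h
  simp [hK, Matrix.mul_add, Matrix.add_mul, Finset.sum_add_distrib]

lemma channel_smul {Λ : Matrix n n ℂ → Matrix n n ℂ} (h : IsChannel Λ)
    (c : ℂ) (X : Matrix n n ℂ) : Λ (c • X) = c • Λ X := by
  obtain ⟨m, K, hK, -⟩ := h
  simp [hK, Matrix.mul_smul, Matrix.smul_mul, Finset.smul_sum]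

end ChanLemmas

section TrALemmas
variable {A B : Type*} [Fintype A] [Fintype B] [DecidableEq A]

lemma trA_add (X Y : Matrix (A × B) (A × B) ℂ) : trA (X + Y) = trA X + trA Y := by
  ext b b'; simp [trA, Finset.sum_add_distrib]

lemma trA_smul (c : ℂ) (X : Matrix (A × B) (A × B) ℂ) : trA (c • X) = c • trA X := by
  ext b b'; simp [trA, Finset.mul_sum]

lemma tensIdA_depol_apply (X : Matrix (A × B) (A × B) ℂ) (p q : A × B) :
    tensIdA depol X p q
      = (trA X p.2 q.2 / (Fintype.card A : ℂ)) * (if p.1 = q.1 then 1 else 0) := by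
  simp [tensIdA, depol, trA, Matrix.trace, Matrix.one_apply, Matrix.smul_apply, Matrix.diag]

lemma tensIdA_depol_congr {X Y : Matrix (A × B) (A × B) ℂ} (h : trA X = trA Y) :
    tensIdA depol X = tensIdA depol Y := by
  ext p q; rw [tensIdA_depol_apply, tensIdA_depol_apply, h]

lemma trA_tensIdA_depol [Nonempty A] (X : Matrix (A × B) (A × B) ℂ) :
    trA (tensIdA depol X) = trA X := by
  ext b b'
  have hc : (Fintype.card A : ℂ) ≠ 0 := by
    exact_mod_cast Nat.cast_ne_zero.mpr Fintype.card_ne_zero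
  simp only [trA, Matrix.of_apply]
  calc ∑ a, tensIdA depol X (a, b) (a, b')
      = ∑ _a : A, trA X b b' / (Fintype.card A : ℂ) := by
        refine Finset.sum_congr rfl fun a _ => ?_
        rw [tensIdA_depol_apply]; simp
    _ = (Fintype.card A : ℂ) * (trA X b b' / (Fintype.card A : ℂ)) := by
        rw [Finset.sum_const, Finset.card_univ, nsmul_eq_mul]
    _ = trA X b b' := by field_simp

lemma tensIdA_depol_add (X Y : Matrix (A × B) (A × B) ℂ) :
    tensIdA depol (X + Y) = tensIdA depol X + tensIdA depol Y := by
  ext p q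
  simp only [tensIdA_depol_apply, trA_add, Matrix.add_apply]
  split_ifs <;> ring

lemma tensIdA_depol_smul (c : ℂ) (X : Matrix (A × B) (A × B) ℂ) :
    tensIdA depol (c • X) = c • tensIdA depol X := by
  ext p q
  simp [tensIdA_depol_apply, trA_smul, mul_assoc, mul_div_assoc]

lemma trA_tensIdA_channel {Γ : Matrix A A ℂ → Matrix A A ℂ} (hΓ : IsChannel Γ)
    (ρ : Matrix (A × B) (A × B) ℂ) : trA (tensIdA Γ ρ) = trA ρ := by
  ext b b'
  have h := channel_trace hΓ (Matrix.of fun a a' => ρ (a, b) (a', b'))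
  simpa [trA, tensIdA, Matrix.trace, Matrix.diag] using h

end TrALemmas

-- depol is a channel
lemma depol_isChannel {A : Type*} [Fintype A] [DecidableEq A] [Nonempty A] :
    IsChannel (depol (A := A)) := by
  classical
  set c : ℂ := ((Real.sqrt (Fintype.card A) : ℝ) : ℂ)⁻¹ with hcdef
  have hcard : (Fintype.card A : ℂ) ≠ 0 := by
    exact_mod_cast Nat.cast_ne_zero.mpr Fintype.card_ne_zero
  have hstar : star c = c := by
    simp [hcdef, star_inv₀, Complex.conj_ofReal]
  have hcc : c * c = ((Fintype.card A : ℂ))⁻¹ := by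
    rw [hcdef, ← mul_inv]
    congr 1
    rw [← Complex.ofReal_mul, Real.mul_self_sqrt (by positivity)]
    simp
  set e := (Fintype.equivFin (A × A)) with hedef
  refine ⟨Fintype.card (A × A),
    fun i => c • Matrix.single (e.symm i).1 (e.symm i).2 1, ?_, ?_⟩
  · intro X
    have hE : ∀ i j : A, (Matrix.single i j (1:ℂ))ᴴ = Matrix.single j i 1 := by
      intro i j; ext r s
      simp [Matrix.conjTranspose_apply, Matrix.single, and_comm]
    have hprod : ∀ i j : A, Matrix.single i j (1:ℂ) * X * Matrix.single j i 1
        = X j j • Matrix.single i i 1 := by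
      intro i j; ext r s
      simp [Matrix.mul_apply, Matrix.single, ite_and, Finset.sum_ite_eq,
        Finset.sum_ite_eq', mul_comm] <;> split_ifs <;> rfl
    have hone : ∑ i : A, Matrix.single i i (1:ℂ) = 1 := by
      ext r s
      simp [Matrix.sum_apply, Matrix.single, Matrix.one_apply, ite_and,
        Finset.sum_ite_eq]
    have hsum : ∀ (f : A × A → Matrix A A ℂ), ∑ i, f (e.symm i) = ∑ p, f p :=
      fun f => Equiv.sum_comp e.symm f
    rw [hsum fun p => (c • Matrix.single p.1 p.2 1) * X *
        (c • Matrix.single p.1 p.2 1)ᴴ]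
    have hterm : ∀ p : A × A, (c • Matrix.single p.1 p.2 1) * X *
        (c • Matrix.single p.1 p.2 1)ᴴ
        = (c * c * X p.2 p.2) • Matrix.single p.1 p.1 1 := by
      intro p
      rw [Matrix.conjTranspose_smul, hstar, hE, Matrix.smul_mul, Matrix.smul_mul,
        Matrix.mul_smul, hprod, smul_smul, smul_smul]
    rw [Finset.sum_congr rfl fun p _ => hterm p, Fintype.sum_prod_type]
    symm
    calc ∑ x : A, ∑ y : A, (c * c * X (x, y).2 (x, y).2) • Matrix.single (x, y).1 (x, y).1 (1:ℂ)
        = ∑ i : A, (c * c * X.trace) • Matrix.single i i (1:ℂ) := by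
          refine Finset.sum_congr rfl fun i _ => ?_
          show ∑ y : A, (c * c * X y y) • Matrix.single i i (1:ℂ) = _
          rw [← Finset.sum_smul, ← Finset.mul_sum]
          rfl
      _ = (c * c * X.trace) • (1 : Matrix A A ℂ) := by rw [← Finset.smul_sum, hone]
      _ = depol X := by
          rw [hcc, depol]
          congr 1
          rw [div_eq_mul_inv, mul_comm]
  · have hE : ∀ i j : A, (Matrix.single i j (1:ℂ))ᴴ = Matrix.single j i 1 := by
      intro i j; ext r s
      simp [Matrix.conjTranspose_apply, Matrix.single, and_comm]
    have hone : ∑ j : A, Matrix.single j j (1:ℂ) = 1 := by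
      ext r s
      simp [Matrix.sum_apply, Matrix.single, Matrix.one_apply, ite_and,
        Finset.sum_ite_eq]
    have hsum : ∀ (f : A × A → Matrix A A ℂ), ∑ i, f (e.symm i) = ∑ p, f p :=
      fun f => Equiv.sum_comp e.symm f
    rw [hsum fun p => (c • Matrix.single p.1 p.2 1)ᴴ * (c • Matrix.single p.1 p.2 1)]
    have hterm : ∀ p : A × A, (c • Matrix.single p.1 p.2 1)ᴴ *
        (c • Matrix.single p.1 p.2 1)
        = (c * c) • Matrix.single p.2 p.2 (1:ℂ) := by
      intro p
      rw [Matrix.conjTranspose_smul, hstar, hE, Matrix.smul_mul, Matrix.mul_smul,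
        Matrix.single_mul_single_same, smul_smul, one_mul]
    rw [Finset.sum_congr rfl fun p _ => hterm p, Fintype.sum_prod_type]
    calc ∑ x : A, ∑ y : A, (c * c) • Matrix.single (x, y).2 (x, y).2 (1:ℂ)
        = ∑ _x : A, (c * c) • (1 : Matrix A A ℂ) := by
          refine Finset.sum_congr rfl fun i _ => ?_
          show ∑ y : A, (c * c) • Matrix.single y y (1:ℂ) = _
          rw [← Finset.smul_sum, hone]
      _ = (Fintype.card A : ℂ) • ((c * c) • (1 : Matrix A A ℂ)) := by
          rw [Finset.sum_const, Finset.card_univ, ← Nat.cast_smul_eq_nsmul ℂ]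
      _ = 1 := by
          rw [hcc, smul_smul]
          rw [mul_inv_cancel₀ hcard, one_smul]

-- ===== states span =====
def outer {n : Type*} (w : n → ℂ) : Matrix n n ℂ :=
  Matrix.of fun i j => w i * (starRingEnd ℂ) (w j)

lemma outer_posSemidef {n : Type*} [Fintype n] [DecidableEq n] [Nonempty n] (w : n → ℂ) :
    (outer w).PosSemidef := by
  classical
  set i0 : n := Classical.arbitrary n
  have h : outer w = (Matrix.of fun (i j : n) =>
      if i = i0 then (starRingEnd ℂ) (w j) else 0)ᴴ *
      (Matrix.of fun (i j : n) => if i = i0 then (starRingEnd ℂ) (w j) else 0) := by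
    ext i j
    simp [outer, Matrix.mul_apply, Matrix.conjTranspose_apply, apply_ite,
      Finset.sum_ite_eq, Finset.sum_ite_eq']
  rw [h]
  exact Matrix.posSemidef_conjTranspose_mul_self _

lemma outer_trace {n : Type*} [Fintype n] (w : n → ℂ) :
    (outer w).trace = ∑ j, w j * (starRingEnd ℂ) (w j) := rfl

lemma isState_outer {n : Type*} [Fintype n] [DecidableEq n] [Nonempty n] (w : n → ℂ)
    (hw : ∑ j, w j * (starRingEnd ℂ) (w j) = 1) : IsState (outer w) :=
  ⟨outer_posSemidef w, by rw [outer_trace, hw]⟩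

lemma outer_smul {n : Type*} (c : ℂ) (w : n → ℂ) :
    outer (c • w) = (c * (starRingEnd ℂ) c) • outer w := by
  ext i j
  simp only [outer, Pi.smul_apply, smul_eq_mul, _root_.map_mul, Matrix.smul_apply,
    Matrix.of_apply]
  ring

lemma sum_pair {n : Type*} [Fintype n] [DecidableEq n] {a b : n} (hab : a ≠ b) (x y : ℂ) :
    ∑ j, (if j = a then x else if j = b then y else 0) = x + y := by
  have hpt : ∀ j, (if j = a then x else if j = b then y else 0)
      = (if j = a then x else 0) + (if j = b then y else 0) := by
    intro j
    split_ifs with h1 h2 <;> simp_all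
  simp_rw [hpt]
  rw [Finset.sum_add_distrib]
  simp [Finset.sum_ite_eq']

lemma outer_single_decomp {n : Type*} [DecidableEq n] (a : n) (x : ℂ) :
    outer (fun j => if j = a then x else 0)
      = (x * (starRingEnd ℂ) x) • Matrix.single a a 1 := by
  ext i j
  by_cases hia : i = a <;> by_cases hja : j = a <;>
    simp_all [outer, Matrix.single, eq_comm]

lemma outer_pair_decomp {n : Type*} [DecidableEq n] {a b : n} (hab : ¬ a = b) (x y : ℂ) :
    outer (fun j => if j = a then x else if j = b then y else 0)
      = (x * (starRingEnd ℂ) x) • Matrix.single a a 1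
      + (x * (starRingEnd ℂ) y) • Matrix.single a b 1
      + (y * (starRingEnd ℂ) x) • Matrix.single b a 1
      + (y * (starRingEnd ℂ) y) • Matrix.single b b 1 := by
  have hba : ¬ b = a := fun hc => hab hc.symm
  ext i j
  by_cases hia : i = a <;> by_cases hib : i = b <;>
    by_cases hja : j = a <;> by_cases hjb : j = b <;>
    simp_all [outer, Matrix.single, eq_comm]

lemma zero_of_vanishing_on_states {n : Type*} [Fintype n] [DecidableEq n] [Nonempty n]
    {M : Type*} [AddCommGroup M] [Module ℂ M] (f : Matrix n n ℂ →ₗ[ℂ] M)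
    (h : ∀ ρ, IsState ρ → f ρ = 0) (X : Matrix n n ℂ) : f X = 0 := by
  classical
  set t : ℂ := ((Real.sqrt 2 : ℝ) : ℂ)⁻¹ with htdef
  have hts : (starRingEnd ℂ) t = t := by
    simp [htdef, map_inv₀, Complex.conj_ofReal]
  have htt : t * (starRingEnd ℂ) t = 1/2 := by
    rw [hts, htdef, ← mul_inv, ← Complex.ofReal_mul, Real.mul_self_sqrt (by norm_num)]
    norm_num
  have hstd : ∀ a b : n, f (Matrix.single a b 1) = 0 := by
    intro a b
    set va : n → ℂ := fun j => if j = a then 1 else 0 with hva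
    set vb : n → ℂ := fun j => if j = b then 1 else 0 with hvb
    have hfva : f (outer va) = 0 := by
      refine h _ (isState_outer _ ?_)
      have : ∀ j, va j * (starRingEnd ℂ) (va j) = (if j = a then 1 else 0) := by
        intro j; by_cases hj : j = a <;> simp [hva, hj]
      simp_rw [this]
      simp [Finset.sum_ite_eq']
    have hfvb : f (outer vb) = 0 := by
      refine h _ (isState_outer _ ?_)
      have : ∀ j, vb j * (starRingEnd ℂ) (vb j) = (if j = b then 1 else 0) := by
        intro j; by_cases hj : j = b <;> simp [hvb, hj]
      simp_rw [this]
      simp [Finset.sum_ite_eq']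
    by_cases hab : a = b
    · subst hab
      have heq : Matrix.single a a (1:ℂ) = outer va := by
        ext i j
        by_cases hi : i = a <;> by_cases hj : j = a <;>
          simp [outer, Matrix.single, hva, hi, hj, Ne.symm, eq_comm]
      rw [heq]; exact hfva
    · set u2 : n → ℂ := fun j => if j = a then 1 else if j = b then 1 else 0 with hu2
      set u3 : n → ℂ := fun j => if j = a then 1 else if j = b then Complex.I else 0 with hu3
      -- f vanishes on outer u2 and outer u3
      have key : ∀ (w : n → ℂ) (j : n), (t • w) j * (starRingEnd ℂ) ((t • w) j)
          = ((1:ℂ)/2) * (w j * (starRingEnd ℂ) (w j)) := by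
        intro w j
        simp only [Pi.smul_apply, smul_eq_mul, _root_.map_mul]
        rw [show t * w j * ((starRingEnd ℂ) t * (starRingEnd ℂ) (w j))
            = (t * (starRingEnd ℂ) t) * (w j * (starRingEnd ℂ) (w j)) by ring, htt]
      have hfu2 : f (outer u2) = 0 := by
        have hst : IsState (outer (t • u2)) := by
          refine isState_outer _ ?_
          have hpt : ∀ j, (t • u2) j * (starRingEnd ℂ) ((t • u2) j)
              = (if j = a then 1/2 else if j = b then 1/2 else 0) := by
            intro j
            rw [key]
            by_cases hj1 : j = a
            · simp [hu2, hj1]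
            · by_cases hj2 : j = b <;> simp [hu2, hj1, hj2]
          simp_rw [hpt]
          rw [sum_pair hab]
          norm_num
        have h0 := h _ hst
        rw [outer_smul, htt, LinearMap.map_smul] at h0
        have : ((1:ℂ)/2) ≠ 0 := by norm_num
        exact (smul_eq_zero.mp h0).resolve_left this
      have hfu3 : f (outer u3) = 0 := by
        have hst : IsState (outer (t • u3)) := by
          refine isState_outer _ ?_
          have hpt : ∀ j, (t • u3) j * (starRingEnd ℂ) ((t • u3) j)
              = (if j = a then 1/2 else if j = b then 1/2 else 0) := by
            intro j
            rw [key]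
            by_cases hj1 : j = a
            · simp [hu3, hj1]
            · by_cases hj2 : j = b
              · have hba : ¬ b = a := fun hc => hab hc.symm
                simp [hu3, hj1, hj2, hba, Complex.conj_I, Complex.I_mul_I]
              · simp [hu3, hj1, hj2]
          simp_rw [hpt]
          rw [sum_pair hab]
          norm_num
        have h0 := h _ hst
        rw [outer_smul, htt, LinearMap.map_smul] at h0
        have : ((1:ℂ)/2) ≠ 0 := by norm_num
        exact (smul_eq_zero.mp h0).resolve_left this
      -- decomposition of the off-diagonal matrix unit
      have hba : ¬ b = a := fun hc => hab hc.symm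
      have hva' : outer va = Matrix.single a a 1 := by
        rw [hva, outer_single_decomp]; simp
      have hvb' : outer vb = Matrix.single b b 1 := by
        rw [hvb, outer_single_decomp]; simp
      have h2 : outer u2 = Matrix.single a a 1 + Matrix.single a b 1
          + Matrix.single b a 1 + Matrix.single b b 1 := by
        rw [hu2, outer_pair_decomp hab]; simp
      have h3 : outer u3 = Matrix.single a a 1 + (-Complex.I) • Matrix.single a b 1
          + Complex.I • Matrix.single b a 1 + Matrix.single b b 1 := by
        rw [hu3, outer_pair_decomp hab]
        simp [Complex.conj_I, Complex.I_mul_I, mul_neg, neg_smul]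
      have hdecomp : Matrix.single a b (1:ℂ)
          = ((1:ℂ)/2) • outer u2 + (Complex.I/2) • outer u3
            - ((1 + Complex.I)/2) • (outer va + outer vb) := by
        rw [h2, h3, hva', hvb']
        rw [show ((1:ℂ) + Complex.I)/2 = 1/2 + Complex.I/2 by ring]
        have hI : (Complex.I/2) * (-Complex.I) = 1/2 := by
          rw [div_mul_eq_mul_div, mul_neg, Complex.I_mul_I]; norm_num
        have hI2 : (Complex.I/2) * Complex.I = -(1/2) := by
          rw [div_mul_eq_mul_div, Complex.I_mul_I]; norm_num
        simp only [smul_add, smul_sub, add_smul, smul_smul, hI, hI2, smul_neg, neg_smul]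
        module
      rw [hdecomp]
      simp only [_root_.map_sub, _root_.map_add, LinearMap.map_smul, hfu2, hfu3, hfva, hfvb]
      simp
  have hX : X = ∑ a : n, ∑ b : n, Matrix.single a b (X a b) :=
    Matrix.matrix_eq_sum_single X
  calc f X = f (∑ a : n, ∑ b : n, Matrix.single a b (X a b)) := by rw [← hX]
    _ = 0 := by
        rw [map_sum]
        refine Finset.sum_eq_zero fun a _ => ?_
        rw [map_sum]
        refine Finset.sum_eq_zero fun b _ => ?_
        have hsm : Matrix.single a b (X a b) = X a b • Matrix.single a b 1 := by
          rw [Matrix.smul_single, smul_eq_mul, mul_one]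
        rw [hsm, LinearMap.map_smul, hstd, smul_zero]

/-- a channel is A↛B semicausal iff
`(D_A ⊗ id) ∘ Λ ∘ (D_A ⊗ id) = (D_A ⊗ id) ∘ Λ` as maps on all matrices. -/
theorem stmt_3 {A B : Type*} [Fintype A] [Fintype B] [DecidableEq A] [DecidableEq B]
    [Nonempty A] [Nonempty B]
    (Λ : Matrix (A × B) (A × B) ℂ → Matrix (A × B) (A × B) ℂ) (hΛ : IsChannel Λ) :
    SemicausalAtoB Λ ↔
      ∀ X : Matrix (A × B) (A × B) ℂ,
        tensIdA depol (Λ (tensIdA depol X)) = tensIdA depol (Λ X) := by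
  constructor
  · intro hsc
    have hdc : IsChannel (depol (A := A)) := depol_isChannel
    let f : Matrix (A × B) (A × B) ℂ →ₗ[ℂ] Matrix B B ℂ :=
      { toFun := fun X => trA (Λ (tensIdA depol X)) - trA (Λ X)
        map_add' := fun X Y => by
          show trA (Λ (tensIdA depol (X + Y))) - trA (Λ (X + Y))
            = (trA (Λ (tensIdA depol X)) - trA (Λ X)) + (trA (Λ (tensIdA depol Y)) - trA (Λ Y))
          rw [tensIdA_depol_add, channel_add hΛ, channel_add hΛ, trA_add, trA_add]
          abel
        map_smul' := fun c X => by
          show trA (Λ (tensIdA depol (c • X))) - trA (Λ (c • X))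
            = (RingHom.id ℂ) c • (trA (Λ (tensIdA depol X)) - trA (Λ X))
          rw [tensIdA_depol_smul, channel_smul hΛ, channel_smul hΛ, trA_smul, trA_smul,
            RingHom.id_apply, smul_sub] }
    have h0 : ∀ ρ, IsState ρ → f ρ = 0 := by
      intro ρ hρ
      show trA (Λ (tensIdA depol ρ)) - trA (Λ ρ) = 0
      rw [hsc ρ hρ depol hdc, sub_self]
    intro X
    have hz : trA (Λ (tensIdA depol X)) - trA (Λ X) = 0 :=
      zero_of_vanishing_on_states f h0 X
    exact tensIdA_depol_congr (sub_eq_zero.mp hz)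
  · intro hd ρ hρ Γ hΓ
    have h2 : tensIdA depol (tensIdA Γ ρ) = tensIdA depol ρ :=
      tensIdA_depol_congr (trA_tensIdA_channel hΓ ρ)
    calc trA (Λ (tensIdA Γ ρ))
        = trA (tensIdA depol (Λ (tensIdA Γ ρ))) := (trA_tensIdA_depol _).symm
      _ = trA (tensIdA depol (Λ (tensIdA depol (tensIdA Γ ρ)))) := by rw [hd]
      _ = trA (tensIdA depol (Λ (tensIdA depol ρ))) := by rw [h2]
      _ = trA (tensIdA depol (Λ ρ)) := by rw [hd]
      _ = trA (Λ ρ) := trA_tensIdA_depol _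
end
end

section
/- A channel Λ on the bipartite system A × B is A↛B semicausal if and only if it preserves the equivalence classes of states with equal B-marginal: for all states ρ and σ on A × B with Tr_A(ρ) = Tr_A(σ), one has Tr_A(Λ[ρ]) = Tr_A(Λ[σ]). -/
open Matrix BigOperators
open scoped Kronecker ComplexOrder

noncomputable section

/-! ### Auxiliary lemmas -/

lemma posSemidef_sum {n ι : Type*} [Fintype n] (s : Finset ι) (f : ι → Matrix n n ℂ)
    (h : ∀ i ∈ s, (f i).PosSemidef) : (∑ i ∈ s, f i).PosSemidef := by
  classical
  induction s using Finset.induction with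
  | empty => simpa using Matrix.PosSemidef.zero
  | @insert x s hx ih =>
    rw [Finset.sum_insert hx]
    exact (h x (Finset.mem_insert_self _ _)).add
      (ih fun i hi => h i (Finset.mem_insert_of_mem hi))

lemma trace_channel {n : Type*} [Fintype n] [DecidableEq n]
    {Γ : Matrix n n ℂ → Matrix n n ℂ} (h : IsChannel Γ) (X : Matrix n n ℂ) :
    (Γ X).trace = X.trace := by
  obtain ⟨m, K, hK, hsum⟩ := h
  calc (Γ X).trace = ∑ i, (K i * X * (K i)ᴴ).trace := by rw [hK, Matrix.trace_sum]
    _ = ∑ i, ((K i)ᴴ * K i * X).trace := by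
        refine Finset.sum_congr rfl fun i _ => ?_
        rw [Matrix.trace_mul_cycle]
    _ = X.trace := by rw [← Matrix.trace_sum, ← Finset.sum_mul, hsum, one_mul]

lemma kron_one_conjTranspose {A B : Type*} [Fintype A] [Fintype B] [DecidableEq B]
    (K : Matrix A A ℂ) :
    (K ⊗ₖ (1 : Matrix B B ℂ))ᴴ = Kᴴ ⊗ₖ (1 : Matrix B B ℂ) := by
  ext ⟨a, b⟩ ⟨a', b'⟩
  simp only [Matrix.conjTranspose_apply, Matrix.kroneckerMap_apply, Matrix.one_apply,
    eq_comm, star_mul', apply_ite (star : ℂ → ℂ), star_zero, star_one]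

lemma tensIdA_kraus {A B : Type*} [Fintype A] [Fintype B] [DecidableEq B]
    {m : ℕ} (K : Fin m → Matrix A A ℂ) (ρ : Matrix (A × B) (A × B) ℂ) :
    tensIdA (fun X => ∑ i, K i * X * (K i)ᴴ) ρ
      = ∑ i, (K i ⊗ₖ (1 : Matrix B B ℂ)) * ρ * (K i ⊗ₖ (1 : Matrix B B ℂ))ᴴ := by
  ext ⟨a, b⟩ ⟨a', b'⟩
  simp only [tensIdA, Matrix.of_apply, Matrix.sum_apply, Matrix.mul_apply,
    Matrix.conjTranspose_apply, Matrix.kroneckerMap_apply, Matrix.one_apply,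
    Fintype.sum_prod_type, mul_ite, ite_mul, mul_one, mul_zero, zero_mul, one_mul,
    Finset.sum_ite_eq, Finset.sum_ite_eq', Finset.mem_univ, if_true,
    apply_ite (star : ℂ → ℂ), star_zero, Finset.mul_sum, Finset.sum_mul]

lemma trA_tensIdA {A B : Type*} [Fintype A] [Fintype B] [DecidableEq A]
    {Γ : Matrix A A ℂ → Matrix A A ℂ} (hΓ : IsChannel Γ) (ρ : Matrix (A × B) (A × B) ℂ) :
    trA (tensIdA Γ ρ) = trA ρ := by
  ext b b'
  have := trace_channel hΓ (Matrix.of fun a a' => ρ (a, b) (a', b'))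
  simpa [trA, tensIdA, Matrix.trace, Matrix.diag] using this

lemma trace_eq_trace_trA {A B : Type*} [Fintype A] [Fintype B]
    (σ : Matrix (A × B) (A × B) ℂ) : σ.trace = (trA σ).trace := by
  simp only [Matrix.trace, Matrix.diag, trA, Matrix.of_apply]
  rw [Fintype.sum_prod_type]
  exact Finset.sum_comm

lemma trace_tensIdA {A B : Type*} [Fintype A] [Fintype B] [DecidableEq A]
    {Γ : Matrix A A ℂ → Matrix A A ℂ} (hΓ : IsChannel Γ) (ρ : Matrix (A × B) (A × B) ℂ) :
    (tensIdA Γ ρ).trace = ρ.trace := by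
  rw [trace_eq_trace_trA, trace_eq_trace_trA ρ, trA_tensIdA hΓ]

lemma posSemidef_tensIdA {A B : Type*} [Fintype A] [Fintype B] [DecidableEq A] [DecidableEq B]
    {Γ : Matrix A A ℂ → Matrix A A ℂ} (hΓ : IsChannel Γ) {ρ : Matrix (A × B) (A × B) ℂ}
    (hρ : ρ.PosSemidef) : (tensIdA Γ ρ).PosSemidef := by
  obtain ⟨m, K, hK, -⟩ := hΓ
  have : tensIdA Γ ρ = tensIdA (fun X => ∑ i, K i * X * (K i)ᴴ) ρ := by
    unfold tensIdA; simp only [hK]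
  rw [this, tensIdA_kraus]
  exact posSemidef_sum _ _ fun i _ => hρ.mul_mul_conjTranspose_same _

/-- Replacement channel sending every matrix to `trace • E_{a0,a0}`. -/
def repl {A : Type*} [Fintype A] [DecidableEq A] (a0 : A) (X : Matrix A A ℂ) :
    Matrix A A ℂ :=
  Matrix.of fun a a' => if a = a0 ∧ a' = a0 then X.trace else 0

lemma repl_isChannel {A : Type*} [Fintype A] [DecidableEq A] (a0 : A) :
    IsChannel (repl a0) := by
  set e := (Fintype.equivFin A).symm with he
  refine ⟨Fintype.card A,
    fun i => Matrix.of fun a a' => if a = a0 ∧ a' = e i then 1 else 0, ?_, ?_⟩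
  · intro X
    ext a a'
    simp only [repl, Matrix.of_apply, Matrix.sum_apply, Matrix.mul_apply,
      Matrix.conjTranspose_apply, apply_ite (star : ℂ → ℂ), star_zero, star_one,
      ite_mul, mul_ite, one_mul, mul_one, zero_mul, mul_zero, ite_and,
      Finset.sum_ite_eq, Finset.sum_ite_eq', Finset.mem_univ, if_true,
      Finset.sum_ite_irrel, Finset.sum_const_zero, Matrix.trace, Matrix.diag]
    rw [← Equiv.sum_comp e (fun c => X c c)]
    by_cases h1 : a = a0 <;> by_cases h2 : a' = a0 <;> simp [h1, h2]
  · ext a a'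
    simp only [Matrix.sum_apply, Matrix.mul_apply, Matrix.conjTranspose_apply,
      Matrix.of_apply, apply_ite (star : ℂ → ℂ), star_zero, star_one,
      ite_mul, mul_ite, one_mul, mul_one, zero_mul, mul_zero, ite_and,
      Finset.sum_ite_eq, Finset.sum_ite_eq', Finset.mem_univ, if_true,
      Finset.sum_ite_irrel, Finset.sum_const_zero, Matrix.one_apply]
    rw [Equiv.sum_comp e (fun c => if a' = c then if a = c then (1:ℂ) else 0 else 0)]
    simp [Finset.sum_ite_eq]

lemma tensIdA_repl {A B : Type*} [Fintype A] [Fintype B] [DecidableEq A]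
    (a0 : A) (ρ : Matrix (A × B) (A × B) ℂ) :
    tensIdA (repl a0) ρ =
      Matrix.of fun p q => if p.1 = a0 ∧ q.1 = a0 then trA ρ p.2 q.2 else 0 := by
  ext ⟨a, b⟩ ⟨a', b'⟩
  simp [tensIdA, repl, trA, Matrix.trace, Matrix.diag]

/-- a channel is A↛B semicausal iff it preserves the equivalence classes
of states with equal B-marginal. -/
theorem stmt_6 {A B : Type*} [Fintype A] [Fintype B] [DecidableEq A] [DecidableEq B]
    [Nonempty A] [Nonempty B]
    (Λ : Matrix (A × B) (A × B) ℂ → Matrix (A × B) (A × B) ℂ) (hΛ : IsChannel Λ) :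
    SemicausalAtoB Λ ↔
      ∀ ρ σ : Matrix (A × B) (A × B) ℂ, IsState ρ → IsState σ →
        trA ρ = trA σ → trA (Λ ρ) = trA (Λ σ) := by
  obtain ⟨a0⟩ := ‹Nonempty A›
  constructor
  · intro hsc ρ σ hρ hσ hmarg
    have h1 := hsc ρ hρ _ (repl_isChannel a0)
    have h2 := hsc σ hσ _ (repl_isChannel a0)
    rw [← h1, ← h2, tensIdA_repl, tensIdA_repl, hmarg]
  · intro h ρ hρ Γ hΓ
    exact h _ _ ⟨posSemidef_tensIdA hΓ hρ.1, by rw [trace_tensIdA hΓ, hρ.2]⟩ hρ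
      (trA_tensIdA hΓ ρ)
end
end
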